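/- Let a, p₀, p₁, p₂ be polynomials over ℂ with a and p₀ coprime (IsCoprime a p₀). If a divides the Wronskian W(p₀,p₁) = p₀·p₁' − p₁·p₀' and a divides W(p₀,p₂) = p₀·p₂' − p₂·p₀', then a divides W(p₁,p₂) = p₁·p₂' − p₂·p₁'. Consequently, a divides all three Wronskians W(p₀,p₁), W(p₀,p₂), W(p₁,p₂) if and only if a divides W(p₀,p₁) and a divides W(p₀,p₂). -/
import Mathlib

open Polynomial

/-- Lemma 3.2: if `a` is coprime to `p₀` and divides the Wronskians `W(p₀,p₁)` and
`W(p₀,p₂)`, then it divides `W(p₁,p₂)`; consequently `a` divides all three Wronskians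
iff it divides `W(p₀,p₁)` and `W(p₀,p₂)`. -/
theorem wronskian_dvd_of_coprime (a p₀ p₁ p₂ : Polynomial ℂ) (hcop : IsCoprime a p₀) :
    ((a ∣ p₀ * derivative p₁ - p₁ * derivative p₀ ∧
      a ∣ p₀ * derivative p₂ - p₂ * derivative p₀) →
      a ∣ p₁ * derivative p₂ - p₂ * derivative p₁) ∧
    ((a ∣ p₀ * derivative p₁ - p₁ * derivative p₀ ∧
      a ∣ p₀ * derivative p₂ - p₂ * derivative p₀ ∧
      a ∣ p₁ * derivative p₂ - p₂ * derivative p₁) ↔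
     (a ∣ p₀ * derivative p₁ - p₁ * derivative p₀ ∧
      a ∣ p₀ * derivative p₂ - p₂ * derivative p₀)) := by
  have key : ∀ (h1 : a ∣ p₀ * derivative p₁ - p₁ * derivative p₀)
      (h2 : a ∣ p₀ * derivative p₂ - p₂ * derivative p₀),
      a ∣ p₁ * derivative p₂ - p₂ * derivative p₁ := by
    intro h1 h2
    have hd : a ∣ p₀ * (p₁ * derivative p₂ - p₂ * derivative p₁) := by
      have : p₀ * (p₁ * derivative p₂ - p₂ * derivative p₁) =
          p₁ * (p₀ * derivative p₂ - p₂ * derivative p₀) -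
          p₂ * (p₀ * derivative p₁ - p₁ * derivative p₀) := by ring
      rw [this]
      exact dvd_sub (Dvd.dvd.mul_left h2 p₁) (Dvd.dvd.mul_left h1 p₂)
    exact (hcop.dvd_of_dvd_mul_left hd)
  exact ⟨fun ⟨h1, h2⟩ => key h1 h2,
    ⟨fun ⟨h1, h2, _⟩ => ⟨h1, h2⟩, fun ⟨h1, h2⟩ => ⟨h1, h2, key h1 h2⟩⟩⟩
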